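/- Let (K,v) be a valued field, (a_i)_{i<λ} a sequence pseudoconverging to a ∈ K, and P ∈ K[X] nonconstant. Then (P(a_i)) pseudoconverges to P(a). -/

import Mathlib

section aux

variable {Γ : Type*} [AddCommGroup Γ] [LinearOrder Γ] [IsOrderedAddMonoid Γ]

private lemma coe_untop'_eq {x : WithTop Γ} (hx : x ≠ ⊤) :
    ((x.untopD 0 : Γ) : WithTop Γ) = x := by
  obtain ⟨y, rfl⟩ := WithTop.ne_top_iff_exists.1 hx
  rfl

private lemma coe_nsmul_withtop (k : ℕ) (γ : Γ) :
    ((k • γ : Γ) : WithTop Γ) = k • (γ : WithTop Γ) := by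
  induction k with
  | zero => simp
  | succ n ih => rw [succ_nsmul, succ_nsmul, WithTop.coe_add, ih]

private lemma nsmul_strict {k : ℕ} (hk : k ≠ 0) {γ1 γ2 : Γ} (h : γ1 < γ2) :
    k • γ1 < k • γ2 :=
  nsmul_lt_nsmul_right hk h

/-- line with smaller slope, once ≤ at `γ1`, is strictly below at any larger `γ2`. -/
private lemma line_step {k k' : ℕ} (hk : k < k') {β β' γ1 γ2 : Γ} (hγ : γ1 < γ2)
    (h : β + k • γ1 ≤ β' + k' • γ1) : β + k • γ2 < β' + k' • γ2 := by
  have hδ : 0 < γ2 - γ1 := sub_pos.2 hγ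
  have hs : k • (γ2 - γ1) < k' • (γ2 - γ1) := nsmul_lt_nsmul_left hδ hk
  calc β + k • γ2 = (β + k • γ1) + k • (γ2 - γ1) := by
        rw [smul_sub]; abel
    _ ≤ (β' + k' • γ1) + k • (γ2 - γ1) := add_le_add_left h _
    _ < (β' + k' • γ1) + k' • (γ2 - γ1) := add_lt_add_right hs _
    _ = β' + k' • γ2 := by rw [smul_sub]; abel

/-- Among finitely many lines `γ ↦ β k + (k+1) • γ` with distinct positive slopes,
one is eventually strictly minimal along a strictly increasing sequence of `γ`'s
indexed by ordinals below a limit ordinal. -/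
private lemma key (lam i0 : Ordinal) (hlam : Order.IsSuccLimit lam) (hi0 : i0 < lam)
    (g : Ordinal → Γ) (hg : ∀ i j, i0 < i → i < j → j < lam → g i < g j)
    (β : ℕ → Γ) :
    ∀ S : Finset ℕ, S.Nonempty → ∃ k₀ ∈ S, ∃ i1, i0 ≤ i1 ∧ i1 < lam ∧
      ∀ i, i1 < i → i < lam → ∀ k ∈ S, k ≠ k₀ →
        β k₀ + (k₀ + 1) • g i < β k + (k + 1) • g i := by
  intro S
  induction S using Finset.strongInduction with
  | _ S ih =>
    intro hS
    have hkS : S.max' hS ∈ S := S.max'_mem hS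
    set k := S.max' hS with hkdef
    by_cases hT : (S.erase k).Nonempty
    · obtain ⟨k₀, hk₀T, i1, hi01, hi1lam, hmin⟩ :=
        ih (S.erase k) (Finset.erase_ssubset hkS) hT
      have hk₀S : k₀ ∈ S := Finset.mem_of_mem_erase hk₀T
      have hk₀k : k₀ < k :=
        lt_of_le_of_ne (S.le_max' _ hk₀S) (Finset.ne_of_mem_erase hk₀T)
      by_cases hA : ∃ i2, i1 < i2 ∧ i2 < lam ∧
          β k₀ + (k₀ + 1) • g i2 < β k + (k + 1) • g i2
      · obtain ⟨i2, h12, h2lam, hlt⟩ := hA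
        have hi02 : i0 < i2 := lt_of_le_of_lt hi01 h12
        refine ⟨k₀, hk₀S, i2, hi02.le, h2lam, ?_⟩
        intro i h2i hilam k' hk'S hk'ne
        by_cases hk'k : k' = k
        · subst hk'k
          exact line_step (by omega) (hg i2 i hi02 h2i hilam) hlt.le
        · exact hmin i (h12.trans h2i) hilam k'
            (Finset.mem_erase.2 ⟨hk'k, hk'S⟩) hk'ne
      · push_neg at hA
        refine ⟨k, hkS, i1, hi01, hi1lam, ?_⟩
        intro i h1i hilam k' hk'S hk'ne
        have hk'T : k' ∈ S.erase k := Finset.mem_erase.2 ⟨hk'ne, hk'S⟩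
        have hle := hA i h1i hilam
        by_cases hk'k₀ : k' = k₀
        · subst hk'k₀
          rcases lt_or_eq_of_le hle with hlt | heq
          · exact hlt
          · exfalso
            have hjlam : Order.succ i < lam := hlam.succ_lt hilam
            have hi0i : i0 < i := lt_of_le_of_lt hi01 h1i
            have hgij : g i < g (Order.succ i) :=
              hg i (Order.succ i) hi0i (Order.lt_succ i) hjlam
            have h2 : β k' + (k' + 1) • g (Order.succ i)
                < β k + (k + 1) • g (Order.succ i) :=
              line_step (by omega) hgij heq.ge
            exact absurd (hA (Order.succ i) (h1i.trans (Order.lt_succ i)) hjlam)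
              (not_le.2 h2)
        · exact lt_of_le_of_lt hle (hmin i h1i hilam k' hk'T hk'k₀)
    · have hSeq : S = {k} := by
        rw [Finset.not_nonempty_iff_eq_empty, Finset.erase_eq_empty_iff] at hT
        rcases hT with h0 | h1
        · exact absurd h0 (Finset.nonempty_iff_ne_empty.1 hS)
        · exact h1
      refine ⟨k, hkS, i0, le_rfl, hi0, ?_⟩
      intro i _ _ k' hk'S hk'ne
      rw [hSeq, Finset.mem_singleton] at hk'S
      exact absurd hk'S hk'ne

end aux

/-- Polynomials are continuous for pseudoconvergence: if `(a_i)_{i<λ}` pseudoconverges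
to `x` in a valued field and `P` is a nonconstant polynomial, then `(P(a_i))`
pseudoconverges to `P(x)`. -/
theorem stmt_14 {K Γ : Type*} [Field K] [AddCommGroup Γ] [LinearOrder Γ] [IsOrderedAddMonoid Γ]
    (v : AddValuation K (WithTop Γ)) (lam : Ordinal) (hlam : Order.IsSuccLimit lam)
    (a : Ordinal → K) (x : K)
    (h : ∃ i0 < lam, ∀ i j, i0 < i → i < j → j < lam → v (a i - x) < v (a j - x))
    (P : Polynomial K) (hP : 0 < P.natDegree) :
    ∃ i0 < lam, ∀ i j, i0 < i → i < j → j < lam →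
      v (P.eval (a i) - P.eval x) < v (P.eval (a j) - P.eval x) := by
  classical
  obtain ⟨i0, hi0lam, hmono⟩ := h
  set d := P.natDegree with hd
  set c : ℕ → K := fun k => (Polynomial.taylor x P).coeff (k + 1) with hc
  have h1 : (Polynomial.taylor x P).natDegree = d := Polynomial.natDegree_taylor P x
  have htne : Polynomial.taylor x P ≠ 0 := by
    intro h0; rw [h0] at h1; simp at h1; omega
  have hcd : c (d - 1) ≠ 0 := by
    have h2 : (Polynomial.taylor x P).coeff ((Polynomial.taylor x P).natDegree) ≠ 0 :=
      fun h3 => htne (Polynomial.leadingCoeff_eq_zero.1 h3)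
    rw [h1] at h2
    simpa [hc, Nat.sub_add_cancel hP] using h2
  -- Taylor expansion
  have hexp : ∀ y : K, P.eval y - P.eval x
      = ∑ k ∈ Finset.range d, c k * (y - x) ^ (k + 1) := by
    intro y
    have h2 : P.eval y
        = ∑ k ∈ Finset.range (d + 1), (Polynomial.taylor x P).coeff k * (y - x) ^ k := by
      rw [← Polynomial.taylor_eval_sub x P y, Polynomial.eval_eq_sum_range, h1]
    rw [h2, Finset.sum_range_succ', Polynomial.taylor_coeff_zero, pow_zero, mul_one,
      add_sub_cancel_right]
  -- the values are finite in the eventual range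
  have hne : ∀ i, i0 < i → i < lam → v (a i - x) ≠ ⊤ := by
    intro i hi hilam htop
    have hcmp := hmono i (Order.succ i) hi (Order.lt_succ i) (hlam.succ_lt hilam)
    rw [htop] at hcmp
    exact not_top_lt hcmp
  set g : Ordinal → Γ := fun i => (v (a i - x)).untopD 0 with hgdef
  have hgcoe : ∀ i, i0 < i → i < lam → ((g i : Γ) : WithTop Γ) = v (a i - x) :=
    fun i hi hilam => coe_untop'_eq (hne i hi hilam)
  have hg : ∀ i j, i0 < i → i < j → j < lam → g i < g j := by
    intro i j hi hij hjlam
    have := hmono i j hi hij hjlam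
    rw [← hgcoe i hi (hij.trans hjlam), ← hgcoe j (hi.trans hij) hjlam] at this
    exact_mod_cast this
  set β : ℕ → Γ := fun k => (v (c k)).untopD 0 with hβdef
  set S : Finset ℕ := (Finset.range d).filter (fun k => c k ≠ 0) with hSdef
  have hS : S.Nonempty :=
    ⟨d - 1, Finset.mem_filter.2 ⟨Finset.mem_range.2 (by omega), hcd⟩⟩
  obtain ⟨k₀, hk₀S, i1, hi01, hi1lam, hmin⟩ := key lam i0 hlam hi0lam g hg β S hS
  -- main valuation computation
  have hval : ∀ i, i1 < i → i < lam →
      v (P.eval (a i) - P.eval x) = ((β k₀ + (k₀ + 1) • g i : Γ) : WithTop Γ) := by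
    intro i h1i hilam
    have hi0i : i0 < i := lt_of_le_of_lt hi01 h1i
    have hgi := hgcoe i hi0i hilam
    have hterm : ∀ k ∈ S, v (c k * (a i - x) ^ (k + 1))
        = ((β k + (k + 1) • g i : Γ) : WithTop Γ) := by
      intro k hk
      have hck : c k ≠ 0 := (Finset.mem_filter.1 hk).2
      have hβk : ((β k : Γ) : WithTop Γ) = v (c k) :=
        coe_untop'_eq (v.ne_top_iff.2 hck)
      rw [v.map_mul, v.map_pow, ← hgi, ← hβk, WithTop.coe_add, coe_nsmul_withtop]
    have hsum : P.eval (a i) - P.eval x = ∑ k ∈ S, c k * (a i - x) ^ (k + 1) := by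
      rw [hexp (a i), hSdef]
      exact (Finset.sum_filter_of_ne (fun k _ hne0 => by
        intro h0; apply hne0; rw [h0, zero_mul])).symm
    rw [hsum, ← Finset.add_sum_erase S _ hk₀S]
    rw [v.map_add_eq_of_lt_left, hterm k₀ hk₀S]
    rw [hterm k₀ hk₀S]
    apply v.map_lt_sum' (WithTop.coe_lt_top _)
    intro k hk
    have hkS : k ∈ S := Finset.mem_of_mem_erase hk
    rw [hterm k hkS]
    exact_mod_cast hmin i h1i hilam k hkS (Finset.ne_of_mem_erase hk)
  refine ⟨i1, hi1lam, ?_⟩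
  intro i j h1i hij hjlam
  have hilam : i < lam := hij.trans hjlam
  rw [hval i h1i hilam, hval j (h1i.trans hij) hjlam]
  have hgij : g i < g j := hg i j (lt_of_le_of_lt hi01 h1i) hij hjlam
  exact_mod_cast add_lt_add_right (nsmul_strict (by omega) hgij) (β k₀)
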